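/- Let $x, h \in \mathbb{R}$, $\epsilon > 0$, and $s \in \mathbb{N}^+$ with $s\epsilon \geq 2(\epsilon + \Delta')$ and $|x - h| \leq \Delta'$. Define the random message $m$ as $(\lceil x/\epsilon\rceil \bmod s)$ with probability $x/\epsilon - \lfloor x/\epsilon\rfloor$ and $(\lfloor x/\epsilon\rfloor \bmod s)$ with probability $\lceil x/\epsilon\rceil - x/\epsilon$, and let $Q_M(x)$ be the point closest to $h$ in the set $\mathbb{Z}_{m,\epsilon} = \{(zs + m)\epsilon : z \in \mathbb{Z}\}$. Then $\mathbb{E}[Q_M(x)] = x$ and $|x - Q_M(x)| < \epsilon$ almost surely. -/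

import Mathlib

/-- Modulo quantizer `Q_M` with side information `h`: the encoder stochastically rounds
`x/ε` to `⌈x/ε⌉` (with probability the fractional part `p = x/ε - ⌊x/ε⌋`) or `⌊x/ε⌋`
(with probability `1 - p`) and transmits the residue `m` mod `s`; the decoder `dec m`
outputs the point of the coset `{(z·s + m)·ε : z ∈ ℤ}` closest to `h`.  If
`s·ε ≥ 2(ε + Δ')` and `|x - h| ≤ Δ'`, then the output is unbiased,
`E[Q_M(x)] = p·dec(⌈x/ε⌉ mod s) + (1-p)·dec(⌊x/ε⌋ mod s) = x`, and every realized
output is within `ε` of `x` (so `|x - Q_M(x)| < ε` almost surely). -/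
theorem modulo_quantizer_unbiased_and_accurate
    (x h Δ' ε : ℝ) (s : ℕ) (hs : 1 ≤ s) (hε : 0 < ε)
    (hcond : (s : ℝ) * ε ≥ 2 * (ε + Δ')) (hdist : |x - h| ≤ Δ')
    (dec : ℤ → ℝ)
    (hdec_mem : ∀ m : ℤ, ∃ z : ℤ, dec m = ((z * s + m : ℤ) : ℝ) * ε)
    (hdec_closest : ∀ m z : ℤ, |dec m - h| ≤ |(((z * s + m : ℤ) : ℝ)) * ε - h|) :
    (x / ε - ⌊x / ε⌋) * dec (⌈x / ε⌉ % (s : ℤ))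
        + (1 - (x / ε - ⌊x / ε⌋)) * dec (⌊x / ε⌋ % (s : ℤ)) = x ∧
    |x - dec (⌈x / ε⌉ % (s : ℤ))| < ε ∧ |x - dec (⌊x / ε⌋ % (s : ℤ))| < ε := by
  have hsR : (1 : ℝ) ≤ (s : ℝ) := by exact_mod_cast hs
  -- Key: for an integer n close to x/ε, the decoder recovers n·ε exactly.
  have key : ∀ n : ℤ, |(n : ℝ) * ε - x| < ε → dec (n % (s : ℤ)) = (n : ℝ) * ε := by
    intro n hn
    have hnh : |(n : ℝ) * ε - h| < (s : ℝ) * ε / 2 := by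
      calc |(n : ℝ) * ε - h| ≤ |(n : ℝ) * ε - x| + |x - h| := by
              have := abs_sub_le ((n : ℝ) * ε) x h
              linarith [this]
        _ < ε + Δ' := by linarith
        _ ≤ (s : ℝ) * ε / 2 := by linarith
    obtain ⟨z, hz⟩ := hdec_mem (n % (s : ℤ))
    have hclose := hdec_closest (n % (s : ℤ)) (n / (s : ℤ))
    have hrec : ((n / (s : ℤ)) * (s : ℤ) + n % (s : ℤ) : ℤ) = n := by
      rw [mul_comm]; exact Int.mul_ediv_add_emod _ _
    rw [hrec] at hclose
    have hdh : |dec (n % (s : ℤ)) - (n : ℝ) * ε| < (s : ℝ) * ε := by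
      have := abs_sub_le (dec (n % (s : ℤ))) h ((n : ℝ) * ε)
      have h2 : |h - (n : ℝ) * ε| = |(n : ℝ) * ε - h| := abs_sub_comm _ _
      calc |dec (n % (s : ℤ)) - (n : ℝ) * ε| ≤ |dec (n % (s : ℤ)) - h| + |h - (n : ℝ) * ε| := this
        _ < (s : ℝ) * ε / 2 + (s : ℝ) * ε / 2 := by
            rw [h2]; exact add_lt_add_of_le_of_lt (le_trans hclose (le_of_lt hnh)) hnh
        _ = (s : ℝ) * ε := by ring
    -- dec (n % s) - n·ε = (z - n/s)·s·ε, an integer multiple of s·ε with absolute value < s·ε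
    obtain ⟨k, hk⟩ : ∃ k : ℤ, k = z - n / (s : ℤ) := ⟨_, rfl⟩
    have hdiff : dec (n % (s : ℤ)) - (n : ℝ) * ε = (k : ℝ) * ((s : ℝ) * ε) := by
      rw [hz]
      have : ((z * (s : ℤ) + n % (s : ℤ) : ℤ) : ℝ) = (k : ℝ) * (s : ℝ) + (n : ℝ) := by
        have : (z * (s : ℤ) + n % (s : ℤ) : ℤ) = k * (s : ℤ) + n := by
          rw [hk]; linear_combination hrec
        rw [this]; push_cast; ring
      rw [this]; ring
    rw [hdiff] at hdh
    have hsε : (0 : ℝ) < (s : ℝ) * ε := by positivity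
    rw [abs_mul, abs_of_pos hsε] at hdh
    have hkabs : |(k : ℝ)| < 1 := by
      by_contra hc
      push_neg at hc
      nlinarith
    have hk0 : k = 0 := by
      have h1 : |k| < 1 := by exact_mod_cast hkabs
      have h2 := abs_lt.mp h1
      omega
    have : dec (n % (s : ℤ)) - (n : ℝ) * ε = 0 := by rw [hdiff, hk0]; simp
    linarith
  -- Floor and ceil are within ε of x
  have hεne : ε ≠ 0 := ne_of_gt hε
  have hfx : x / ε * ε = x := div_mul_cancel₀ x hεne
  have hfloor : |(↑⌊x / ε⌋ : ℝ) * ε - x| < ε := by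
    have h1 : (↑⌊x / ε⌋ : ℝ) ≤ x / ε := Int.floor_le _
    have h2 : x / ε < ↑⌊x / ε⌋ + 1 := Int.lt_floor_add_one _
    rw [abs_lt]
    constructor <;> nlinarith
  have hceil : |(↑⌈x / ε⌉ : ℝ) * ε - x| < ε := by
    have h1 : x / ε ≤ (↑⌈x / ε⌉ : ℝ) := Int.le_ceil _
    have h2 : (↑⌈x / ε⌉ : ℝ) < x / ε + 1 := Int.ceil_lt_add_one _
    rw [abs_lt]
    constructor <;> nlinarith
  have hdecC : dec (⌈x / ε⌉ % (s : ℤ)) = (↑⌈x / ε⌉ : ℝ) * ε := key _ hceil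
  have hdecF : dec (⌊x / ε⌋ % (s : ℤ)) = (↑⌊x / ε⌋ : ℝ) * ε := key _ hfloor
  refine ⟨?_, ?_, ?_⟩
  · rw [hdecC, hdecF]
    rcases eq_or_ne (Int.fract (x / ε)) 0 with hfr | hfr
    · have hfl : (↑⌊x / ε⌋ : ℝ) = x / ε := by
        have := Int.fract_add_floor (x / ε)
        rw [hfr] at this; linarith
      have hce : ⌈x / ε⌉ = ⌊x / ε⌋ := by
        conv_lhs => rw [← hfl]
        exact Int.ceil_intCast _
      rw [hce, hfl]
      field_simp
      ring
    · have hlt : (↑⌊x / ε⌋ : ℝ) < x / ε := by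
        have h0 : 0 ≤ Int.fract (x / ε) := Int.fract_nonneg _
        have : 0 < Int.fract (x / ε) := lt_of_le_of_ne h0 (Ne.symm hfr)
        have hd : Int.fract (x / ε) = x / ε - ↑⌊x / ε⌋ := rfl
        linarith
      have hce : (⌈x / ε⌉ : ℤ) = ⌊x / ε⌋ + 1 :=
        le_antisymm (Int.ceil_le_floor_add_one _) (Int.lt_ceil.mpr hlt)
      rw [hce]; push_cast
      have : x / ε * ε = x := hfx
      nlinarith
  · rw [hdecC, abs_sub_comm]; exact hceil
  · rw [hdecF, abs_sub_comm]; exact hfloor
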